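/- For a probability measure ρ on S^{d-1}, the Gibbs-weighted mean v_α and the ordinary mean E(ρ) satisfy |v_α − E(ρ)|^2 ≤ (4 C_{α,E}^2 − 2) V(ρ). -/

import Mathlib

open MeasureTheory Metric Real

set_option maxHeartbeats 1000000 in
theorem stmt_6 {d : ℕ} (e : EuclideanSpace ℝ (Fin d) → ℝ) (α : ℝ) (hα : 0 < α)
    (hcont : ContinuousOn e (sphere (0 : EuclideanSpace ℝ (Fin d)) 1))
    (hbdd : BddAbove (e '' sphere (0 : EuclideanSpace ℝ (Fin d)) 1) ∧
      BddBelow (e '' sphere (0 : EuclideanSpace ℝ (Fin d)) 1))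
    (ρ : Measure (EuclideanSpace ℝ (Fin d))) [IsProbabilityMeasure ρ]
    (hsph : ∀ᵐ v ∂ρ, ‖v‖ = 1)
    (m : EuclideanSpace ℝ (Fin d)) (hm : m = ∫ w, w ∂ρ)
    (V : ℝ) (hV : V = (1 / 2) * ∫ v, ‖v - m‖ ^ 2 ∂ρ)
    (vα : EuclideanSpace ℝ (Fin d))
    (hvα : vα = (∫ v, Real.exp (-α * e v) ∂ρ)⁻¹ • ∫ v, Real.exp (-α * e v) • v ∂ρ)
    (C : ℝ)
    (hC : C = Real.exp (α * (sSup (e '' sphere (0 : EuclideanSpace ℝ (Fin d)) 1)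
      - sInf (e '' sphere (0 : EuclideanSpace ℝ (Fin d)) 1)))) :
    ‖vα - m‖ ^ 2 ≤ (4 * C ^ 2 - 2) * V := by
  obtain ⟨hA, hB⟩ := hbdd
  set S := sphere (0 : EuclideanSpace ℝ (Fin d)) 1 with hSdef
  set M := sSup (e '' S) with hMdef
  set mI := sInf (e '' S) with hmIdef
  have hmemS : ∀ᵐ v ∂ρ, v ∈ S := by
    filter_upwards [hsph] with v hv
    simpa [hSdef, mem_sphere_zero_iff_norm] using hv
  have hSne : S.Nonempty := by
    by_contra h
    rw [Set.not_nonempty_iff_eq_empty] at h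
    rw [ae_iff] at hmemS
    simp [h] at hmemS
  have hrest : ρ.restrict S = ρ := Measure.restrict_eq_self_of_ae_mem hmemS
  have hem : AEMeasurable e ρ := by
    have h := hcont.aemeasurable (μ := ρ) (isClosed_sphere.measurableSet)
    rwa [hrest] at h
  have hf1m : AEStronglyMeasurable (fun v => Real.exp (-α * e v)) ρ :=
    (Real.measurable_exp.comp_aemeasurable (hem.const_mul (-α))).aestronglyMeasurable
  have hbound : ∀ᵐ v ∂ρ, mI ≤ e v ∧ e v ≤ M := by
    filter_upwards [hmemS] with v hv
    exact ⟨csInf_le hB (Set.mem_image_of_mem e hv), le_csSup hA (Set.mem_image_of_mem e hv)⟩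
  have hexpb : ∀ᵐ v ∂ρ, Real.exp (-α * M) ≤ Real.exp (-α * e v) ∧
      Real.exp (-α * e v) ≤ Real.exp (-α * mI) := by
    filter_upwards [hbound] with v hv
    constructor
    · exact Real.exp_le_exp.2 (by nlinarith [hv.2])
    · exact Real.exp_le_exp.2 (by nlinarith [hv.1])
  have hint1 : Integrable (fun v => Real.exp (-α * e v)) ρ := by
    apply Integrable.mono' (integrable_const (Real.exp (-α * mI))) hf1m
    filter_upwards [hexpb] with v hv
    rw [Real.norm_eq_abs, abs_of_pos (Real.exp_pos _)]
    exact hv.2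
  have hsubm : AEStronglyMeasurable (fun v : EuclideanSpace ℝ (Fin d) => v - m) ρ :=
    aestronglyMeasurable_id.sub aestronglyMeasurable_const
  have hnormb : ∀ᵐ v ∂ρ, ‖v - m‖ ≤ 1 + ‖m‖ := by
    filter_upwards [hsph] with v hv
    calc ‖v - m‖ ≤ ‖v‖ + ‖m‖ := norm_sub_le _ _
    _ = 1 + ‖m‖ := by rw [hv]
  have hintv : Integrable (fun v : EuclideanSpace ℝ (Fin d) => v) ρ := by
    apply Integrable.mono' (integrable_const (1 : ℝ)) aestronglyMeasurable_id
    filter_upwards [hsph] with v hv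
    simp [hv]
  have hf2m : AEStronglyMeasurable (fun v => Real.exp (-α * e v) • v) ρ :=
    hf1m.smul aestronglyMeasurable_id
  have hint2 : Integrable (fun v => Real.exp (-α * e v) • v) ρ := by
    apply Integrable.mono' (integrable_const (Real.exp (-α * mI))) hf2m
    filter_upwards [hexpb, hsph] with v hv hv2
    rw [norm_smul, Real.norm_eq_abs, abs_of_pos (Real.exp_pos _), hv2, mul_one]
    exact hv.2
  have hint3 : Integrable (fun v => Real.exp (-α * e v) • (v - m)) ρ := by
    apply Integrable.mono' (integrable_const (Real.exp (-α * mI) * (1 + ‖m‖)))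
      (hf1m.smul hsubm)
    filter_upwards [hexpb, hnormb] with v hv hv2
    show ‖Real.exp (-α * e v) • (v - m)‖ ≤ _
    rw [norm_smul, Real.norm_eq_abs, abs_of_pos (Real.exp_pos _)]
    apply mul_le_mul hv.2 hv2 (norm_nonneg _) (Real.exp_pos _).le
  have hintnorm : Integrable (fun v => ‖v - m‖) ρ := by
    apply Integrable.mono' (integrable_const (1 + ‖m‖)) hsubm.norm
    filter_upwards [hnormb] with v hv
    rwa [Real.norm_eq_abs, abs_of_nonneg (norm_nonneg _)]
  have hintnorm2 : Integrable (fun v => ‖v - m‖ ^ 2) ρ := by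
    apply Integrable.mono' (integrable_const ((1 + ‖m‖) ^ 2)) ((hsubm.norm.aemeasurable.pow_const 2).aestronglyMeasurable)
    filter_upwards [hnormb] with v hv
    rw [Real.norm_eq_abs, abs_of_nonneg (sq_nonneg _)]
    have h0 : (0:ℝ) ≤ ‖v - m‖ := norm_nonneg _
    nlinarith
  set Z := ∫ v, Real.exp (-α * e v) ∂ρ with hZdef
  have hZ : Real.exp (-α * M) ≤ Z := by
    have : ∫ (_ : EuclideanSpace ℝ (Fin d)), Real.exp (-α * M) ∂ρ = Real.exp (-α * M) := by
      simp
    rw [← this]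
    exact integral_mono_ae (integrable_const _) hint1 (by filter_upwards [hexpb] with v hv using hv.1)
  have hZpos : 0 < Z := lt_of_lt_of_le (Real.exp_pos _) hZ
  have hI3 : ∫ v, Real.exp (-α * e v) • (v - m) ∂ρ
      = (∫ v, Real.exp (-α * e v) • v ∂ρ) - Z • m := by
    simp_rw [smul_sub]
    rw [integral_sub hint2 (hint1.smul_const m), integral_smul_const]
  have hdiff : vα - m = Z⁻¹ • ∫ v, Real.exp (-α * e v) • (v - m) ∂ρ := by
    rw [hI3, smul_sub, smul_smul, inv_mul_cancel₀ hZpos.ne', one_smul, hvα]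
  set I1 := ∫ v, ‖v - m‖ ∂ρ with hI1def
  set I2 := ∫ v, ‖v - m‖ ^ 2 ∂ρ with hI2def
  have hI1nn : 0 ≤ I1 := integral_nonneg fun v => norm_nonneg _
  have hI2nn : 0 ≤ I2 := integral_nonneg fun v => sq_nonneg _
  have hn1 : ‖vα - m‖ ≤ Z⁻¹ * (Real.exp (-α * mI) * I1) := by
    rw [hdiff, norm_smul, Real.norm_eq_abs, abs_of_pos (inv_pos.2 hZpos)]
    apply mul_le_mul_of_nonneg_left _ (inv_pos.2 hZpos).le
    calc ‖∫ v, Real.exp (-α * e v) • (v - m) ∂ρ‖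
        ≤ ∫ v, ‖Real.exp (-α * e v) • (v - m)‖ ∂ρ := norm_integral_le_integral_norm _
      _ ≤ ∫ v, Real.exp (-α * mI) * ‖v - m‖ ∂ρ := by
          apply integral_mono_ae hint3.norm (hintnorm.const_mul _)
          filter_upwards [hexpb] with v hv
          rw [norm_smul, Real.norm_eq_abs, abs_of_pos (Real.exp_pos _)]
          exact mul_le_mul_of_nonneg_right hv.2 (norm_nonneg _)
      _ = Real.exp (-α * mI) * I1 := integral_const_mul _ _
  have hZinv : Z⁻¹ ≤ Real.exp (α * M) := by
    calc Z⁻¹ ≤ (Real.exp (-α * M))⁻¹ := inv_anti₀ (Real.exp_pos _) hZ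
    _ = Real.exp (α * M) := by rw [← Real.exp_neg]; congr 1; ring
  have hCeq : Real.exp (α * M) * Real.exp (-α * mI) = C := by
    rw [hC, ← Real.exp_add]
    ring_nf
  have hmain : ‖vα - m‖ ≤ C * I1 := by
    calc ‖vα - m‖ ≤ Z⁻¹ * (Real.exp (-α * mI) * I1) := hn1
    _ ≤ Real.exp (α * M) * (Real.exp (-α * mI) * I1) := by
        apply mul_le_mul_of_nonneg_right hZinv
        positivity
    _ = C * I1 := by rw [← hCeq]; ring
  have hCS : I1 ^ 2 ≤ I2 := by
    have hmem : MemLp (fun v => ‖v - m‖) 2 ρ :=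
      MemLp.of_bound hsubm.norm (1 + ‖m‖) (by
        filter_upwards [hnormb] with v hv
        rwa [Real.norm_eq_abs, abs_of_nonneg (norm_nonneg _)])
    have hvar := ProbabilityTheory.variance_nonneg (fun v => ‖v - m‖) ρ
    rw [ProbabilityTheory.variance_eq_sub hmem] at hvar
    have heq : ∫ v, ((fun v => ‖v - m‖) ^ 2) v ∂ρ = I2 := by
      simp [hI2def]
    rw [heq] at hvar
    linarith
  have hCone : 1 ≤ C := by
    obtain ⟨x, hx⟩ := hSne
    have h1 : mI ≤ e x := csInf_le hB (Set.mem_image_of_mem e hx)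
    have h2 : e x ≤ M := le_csSup hA (Set.mem_image_of_mem e hx)
    rw [hC]
    apply Real.one_le_exp
    nlinarith
  have hVnn : 0 ≤ V := by rw [hV]; positivity
  have hsq : ‖vα - m‖ ^ 2 ≤ C ^ 2 * I2 := by
    calc ‖vα - m‖ ^ 2 ≤ (C * I1) ^ 2 := by
          apply pow_le_pow_left₀ (norm_nonneg _) hmain
      _ = C ^ 2 * I1 ^ 2 := by ring
      _ ≤ C ^ 2 * I2 := mul_le_mul_of_nonneg_left hCS (sq_nonneg C)
  have hI2V : I2 = 2 * V := by rw [hV]; ring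
  rw [hI2V] at hsq
  have hkey : 0 ≤ (C ^ 2 - 1) * V := mul_nonneg (by nlinarith) hVnn
  linarith
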